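/- Let a₁, b₁, a₂, b₂ be integers with a₁a₂(a₁b₂ - a₂b₁) ≠ 0, and let m₁, m₂, k₁, k₂, l be positive integers satisfying m₁ = k₂(a₁b₂ - a₂b₁)/(a₂(k₂ - k₁)), m₂ = k₁(a₁b₂ - a₂b₁)/(a₁(k₂ - k₁)), and k₁σ(m₁) = k₂σ(m₂). Suppose q₁ = k₁l - 1 and q₂ = k₂l - 1 are both primes, with qᵢ not dividing mᵢ for i = 1, 2. If n = (m₁q₁ - b₁)/a₁ is an integer, then a₁n + b₁ = m₁q₁, a₂n + b₂ = m₂q₂, and σ(a₁n + b₁) = σ(a₂n + b₂). -/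
import Mathlib


theorem stmt_3 (a₁ b₁ a₂ b₂ : ℤ) (h : a₁ * a₂ * (a₁ * b₂ - a₂ * b₁) ≠ 0)
    (m₁ m₂ k₁ k₂ l q₁ q₂ : ℕ)
    (hm₁pos : 0 < m₁) (hm₂pos : 0 < m₂) (hk₁pos : 0 < k₁) (hk₂pos : 0 < k₂) (hl : 0 < l)
    (hm₁ : (m₁ : ℤ) * (a₂ * ((k₂ : ℤ) - (k₁ : ℤ))) = (k₂ : ℤ) * (a₁ * b₂ - a₂ * b₁))
    (hm₂ : (m₂ : ℤ) * (a₁ * ((k₂ : ℤ) - (k₁ : ℤ))) = (k₁ : ℤ) * (a₁ * b₂ - a₂ * b₁))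
    (hσ : k₁ * ArithmeticFunction.sigma 1 m₁ = k₂ * ArithmeticFunction.sigma 1 m₂)
    (hq₁ : (q₁ : ℤ) = (k₁ : ℤ) * l - 1) (hq₂ : (q₂ : ℤ) = (k₂ : ℤ) * l - 1)
    (hq₁p : q₁.Prime) (hq₂p : q₂.Prime)
    (hq₁m : ¬ q₁ ∣ m₁) (hq₂m : ¬ q₂ ∣ m₂)
    (n : ℤ) (hn : a₁ * n = (m₁ : ℤ) * q₁ - b₁) :
    a₁ * n + b₁ = (m₁ : ℤ) * q₁ ∧ a₂ * n + b₂ = (m₂ : ℤ) * q₂ ∧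
      ArithmeticFunction.sigma 1 (m₁ * q₁) = ArithmeticFunction.sigma 1 (m₂ * q₂) := by
  have ha₁ : a₁ ≠ 0 := by intro h0; apply h; rw [h0]; ring
  have hD : a₁ * b₂ - a₂ * b₁ ≠ 0 := by intro h0; apply h; rw [h0]; ring
  have hk₂D : (k₂ : ℤ) * (a₁ * b₂ - a₂ * b₁) ≠ 0 := by
    exact mul_ne_zero (by exact_mod_cast hk₂pos.ne') hD
  have ht : (k₂ : ℤ) - (k₁ : ℤ) ≠ 0 := by
    intro h0
    apply hk₂D
    rw [← hm₁, h0]; ring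
  refine ⟨by linarith, ?_, ?_⟩
  · have key : (a₂ * n + b₂) * (a₁ * ((k₂ : ℤ) - k₁)) =
        ((m₂ : ℤ) * q₂) * (a₁ * ((k₂ : ℤ) - k₁)) := by
      have h1 : a₁ * (a₂ * n + b₂) * ((k₂ : ℤ) - k₁) =
          (a₂ * ((m₁:ℤ) * q₁ - b₁) + a₁ * b₂) * ((k₂ : ℤ) - k₁) := by
        have : a₂ * (a₁ * n) = a₂ * ((m₁:ℤ) * q₁ - b₁) := by rw [hn]
        linear_combination ((k₂:ℤ) - k₁) * this
      have h2 : (a₂ * ((m₁:ℤ) * q₁ - b₁) + a₁ * b₂) * ((k₂ : ℤ) - k₁) =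
          a₁ * ((m₂ : ℤ) * q₂) * ((k₂ : ℤ) - k₁) := by
        rw [hq₁, hq₂]
        nlinarith [hm₁, hm₂]
      calc (a₂ * n + b₂) * (a₁ * ((k₂ : ℤ) - k₁))
          = a₁ * (a₂ * n + b₂) * ((k₂ : ℤ) - k₁) := by ring
        _ = a₁ * ((m₂ : ℤ) * q₂) * ((k₂ : ℤ) - k₁) := by rw [h1, h2]
        _ = ((m₂ : ℤ) * q₂) * (a₁ * ((k₂ : ℤ) - k₁)) := by ring
    exact mul_right_cancel₀ (mul_ne_zero ha₁ ht) key
  · have hc₁ : Nat.Coprime m₁ q₁ := ((Nat.Prime.coprime_iff_not_dvd hq₁p).mpr hq₁m).symm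
    have hc₂ : Nat.Coprime m₂ q₂ := ((Nat.Prime.coprime_iff_not_dvd hq₂p).mpr hq₂m).symm
    have hs₁ : ArithmeticFunction.sigma 1 q₁ = q₁ + 1 := by
      rw [ArithmeticFunction.sigma_one_apply, hq₁p.divisors,
        Finset.sum_pair hq₁p.one_lt.ne]; omega
    have hs₂ : ArithmeticFunction.sigma 1 q₂ = q₂ + 1 := by
      rw [ArithmeticFunction.sigma_one_apply, hq₂p.divisors,
        Finset.sum_pair hq₂p.one_lt.ne]; omega
    have hq₁' : q₁ + 1 = k₁ * l := by
      have := hq₁; push_cast at this ⊢; omega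
    have hq₂' : q₂ + 1 = k₂ * l := by
      have := hq₂; push_cast at this ⊢; omega
    rw [ArithmeticFunction.isMultiplicative_sigma.map_mul_of_coprime hc₁,
      ArithmeticFunction.isMultiplicative_sigma.map_mul_of_coprime hc₂,
      hs₁, hs₂, hq₁', hq₂']
    calc ArithmeticFunction.sigma 1 m₁ * (k₁ * l)
        = (k₁ * ArithmeticFunction.sigma 1 m₁) * l := by ring
      _ = (k₂ * ArithmeticFunction.sigma 1 m₂) * l := by rw [hσ]
      _ = ArithmeticFunction.sigma 1 m₂ * (k₂ * l) := by ring
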